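/- Let W_1,...,W_n be proper subspaces of R^d with projections P_i satisfying ∑_{i=1}^n a_i² P_i = A·I for some scalars a_i and A > 0. Then {W_i}_{i=1}^n does phase retrieval if and only if {W_i^⊥}_{i=1}^n does phase retrieval. -/

import Mathlib

open scoped InnerProductSpace

private lemma proj_inner_self {E : Type*} [NormedAddCommGroup E] [InnerProductSpace ℝ E]
    (K : Submodule ℝ E) [Submodule.HasOrthogonalProjection K] (x : E) :
    ⟪(Submodule.orthogonalProjectionOnto K x : E), x⟫_ℝ = ‖(Submodule.orthogonalProjectionOnto K x : E)‖ ^ 2 := by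
  have := Submodule.inner_orthogonalProjectionOnto_eq_of_mem_left (K := K) (Submodule.orthogonalProjectionOnto K x) x
  rw [← this, Submodule.coe_inner, real_inner_self_eq_norm_sq]

private lemma key_sum (d n : ℕ)
    (W : Fin n → Submodule ℝ (EuclideanSpace ℝ (Fin d)))
    (a : Fin n → ℝ) (A : ℝ)
    (h : ∀ x : EuclideanSpace ℝ (Fin d),
      ∑ i, a i ^ 2 • ((Submodule.orthogonalProjectionOnto (W i) x : EuclideanSpace ℝ (Fin d))) = A • x)
    (x : EuclideanSpace ℝ (Fin d)) :
    ∑ i, a i ^ 2 * ‖(Submodule.orthogonalProjectionOnto (W i) x : EuclideanSpace ℝ (Fin d))‖ ^ 2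
      = A * ‖x‖ ^ 2 := by
  have h2 := congrArg (fun v => ⟪v, x⟫_ℝ) (h x)
  simp only [sum_inner, real_inner_smul_left] at h2
  rw [real_inner_self_eq_norm_sq] at h2
  rw [← h2]
  exact Finset.sum_congr rfl fun i _ => by rw [proj_inner_self]

/-- For proper subspaces with `∑ aᵢ² Pᵢ = A·I`, `{Wᵢ}` does phase retrieval iff `{Wᵢᗮ}` does. -/
theorem tight_complements_phase_iff (d n : ℕ)
    (W : Fin n → Submodule ℝ (EuclideanSpace ℝ (Fin d)))
    (hW : ∀ i, W i ≠ ⊤)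
    (a : Fin n → ℝ) (A : ℝ) (hA : 0 < A)
    (h : ∀ x : EuclideanSpace ℝ (Fin d),
      ∑ i, a i ^ 2 • ((Submodule.orthogonalProjectionOnto (W i) x : EuclideanSpace ℝ (Fin d))) = A • x) :
    (∀ x y : EuclideanSpace ℝ (Fin d),
      (∀ i, ‖(Submodule.orthogonalProjectionOnto (W i) x : EuclideanSpace ℝ (Fin d))‖
        = ‖(Submodule.orthogonalProjectionOnto (W i) y : EuclideanSpace ℝ (Fin d))‖) → x = y ∨ x = -y) ↔
    (∀ x y : EuclideanSpace ℝ (Fin d),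
      (∀ i, ‖(Submodule.orthogonalProjectionOnto (W i)ᗮ x : EuclideanSpace ℝ (Fin d))‖
        = ‖(Submodule.orthogonalProjectionOnto (W i)ᗮ y : EuclideanSpace ℝ (Fin d))‖) → x = y ∨ x = -y) := by
  -- handle d = 0
  rcases Nat.eq_zero_or_pos d with rfl | hd
  · constructor <;> intro _ x y _ <;> left <;>
      exact Subsingleton.elim x y
  -- abbreviations
  set S : ℝ := ∑ i, a i ^ 2 with hS
  -- complement sum formula
  have hcomp : ∀ x : EuclideanSpace ℝ (Fin d),
      ∑ i, a i ^ 2 * ‖(Submodule.orthogonalProjectionOnto (W i)ᗮ x : EuclideanSpace ℝ (Fin d))‖ ^ 2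
        = (S - A) * ‖x‖ ^ 2 := by
    intro x
    have hk := key_sum d n W a A h x
    have hp : ∀ i, ‖(Submodule.orthogonalProjectionOnto (W i)ᗮ x : EuclideanSpace ℝ (Fin d))‖ ^ 2
        = ‖x‖ ^ 2 - ‖(Submodule.orthogonalProjectionOnto (W i) x : EuclideanSpace ℝ (Fin d))‖ ^ 2 := by
      intro i
      have := Submodule.norm_sq_eq_add_norm_sq_projection (𝕜 := ℝ) x (W i)
      simp only [Submodule.norm_coe] at *
      linarith
    calc ∑ i, a i ^ 2 * ‖(Submodule.orthogonalProjectionOnto (W i)ᗮ x : EuclideanSpace ℝ (Fin d))‖ ^ 2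
        = ∑ i, (a i ^ 2 * ‖x‖ ^ 2
            - a i ^ 2 * ‖(Submodule.orthogonalProjectionOnto (W i) x : EuclideanSpace ℝ (Fin d))‖ ^ 2) := by
          refine Finset.sum_congr rfl fun i _ => ?_
          rw [hp i]; ring
      _ = S * ‖x‖ ^ 2 - A * ‖x‖ ^ 2 := by
          rw [Finset.sum_sub_distrib, hk, ← Finset.sum_mul]
      _ = (S - A) * ‖x‖ ^ 2 := by ring
  -- S - A > 0
  have hSA : 0 < S - A := by
    -- pick a nonzero vector
    obtain ⟨z, hz⟩ : ∃ z : EuclideanSpace ℝ (Fin d), z ≠ 0 := by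
      refine ⟨EuclideanSpace.single ⟨0, hd⟩ 1, ?_⟩
      intro hc
      have := congrArg (fun v : EuclideanSpace ℝ (Fin d) => v ⟨0, hd⟩) hc
      simp [EuclideanSpace.single] at this
    -- find i with a i ≠ 0
    have hk := key_sum d n W a A h z
    have hzpos : 0 < ‖z‖ ^ 2 := pow_pos (norm_pos_iff.mpr hz) 2
    have hsumpos : 0 < ∑ i, a i ^ 2 *
        ‖(Submodule.orthogonalProjectionOnto (W i) z : EuclideanSpace ℝ (Fin d))‖ ^ 2 := by
      rw [hk]; positivity
    obtain ⟨i, -, hi⟩ : ∃ i ∈ Finset.univ, a i ^ 2 *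
        ‖(Submodule.orthogonalProjectionOnto (W i) z : EuclideanSpace ℝ (Fin d))‖ ^ 2 ≠ 0 := by
      by_contra hc
      push_neg at hc
      rw [Finset.sum_eq_zero hc] at hsumpos
      exact lt_irrefl 0 hsumpos
    have hai : a i ^ 2 > 0 := by
      rcases lt_or_eq_of_le (sq_nonneg (a i)) with h' | h'
      · exact h'
      · exact absurd (by rw [← h']; ring) hi
    -- pick nonzero w in (W i)ᗮ
    have hne : (W i)ᗮ ≠ ⊥ := by
      intro hc
      exact hW i ((Submodule.orthogonal_eq_bot_iff).mp hc)
    obtain ⟨w, hw, hw0⟩ := Submodule.exists_mem_ne_zero_of_ne_bot hne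
    have hwcomp := hcomp w
    -- the i-th term of the complement sum is a i ^2 * ‖w‖^2
    have hwproj : (Submodule.orthogonalProjectionOnto (W i)ᗮ w : EuclideanSpace ℝ (Fin d)) = w := by
      exact Submodule.starProjection_eq_self_iff.mpr hw
    have hwpos : 0 < ‖w‖ ^ 2 := pow_pos (norm_pos_iff.mpr hw0) 2
    have hle : a i ^ 2 * ‖w‖ ^ 2 ≤ (S - A) * ‖w‖ ^ 2 := by
      rw [← hwcomp]
      have : a i ^ 2 * ‖w‖ ^ 2 = a i ^ 2 *
          ‖(Submodule.orthogonalProjectionOnto (W i)ᗮ w : EuclideanSpace ℝ (Fin d))‖ ^ 2 := by rw [hwproj]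
      rw [this]
      exact Finset.single_le_sum
        (f := fun j => a j ^ 2 * ‖(Submodule.orthogonalProjectionOnto (W j)ᗮ w : EuclideanSpace ℝ (Fin d))‖ ^ 2)
        (fun j _ => by positivity) (Finset.mem_univ i)
    nlinarith
  -- norms equal lemmas
  have hnorm_of_comp : ∀ x y : EuclideanSpace ℝ (Fin d),
      (∀ i, ‖(Submodule.orthogonalProjectionOnto (W i)ᗮ x : EuclideanSpace ℝ (Fin d))‖
        = ‖(Submodule.orthogonalProjectionOnto (W i)ᗮ y : EuclideanSpace ℝ (Fin d))‖) → ‖x‖ = ‖y‖ := by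
    intro x y hxy
    have h1 := hcomp x
    have h2 := hcomp y
    have : ∑ i, a i ^ 2 * ‖(Submodule.orthogonalProjectionOnto (W i)ᗮ x : EuclideanSpace ℝ (Fin d))‖ ^ 2
        = ∑ i, a i ^ 2 * ‖(Submodule.orthogonalProjectionOnto (W i)ᗮ y : EuclideanSpace ℝ (Fin d))‖ ^ 2 :=
      Finset.sum_congr rfl fun i _ => by rw [hxy i]
    have hsq : ‖x‖ ^ 2 = ‖y‖ ^ 2 := by
      have := h1.symm.trans (this.trans h2)
      exact mul_left_cancel₀ (ne_of_gt hSA) this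
    rw [← Real.sqrt_sq (norm_nonneg x), ← Real.sqrt_sq (norm_nonneg y), hsq]
  have hnorm_of_proj : ∀ x y : EuclideanSpace ℝ (Fin d),
      (∀ i, ‖(Submodule.orthogonalProjectionOnto (W i) x : EuclideanSpace ℝ (Fin d))‖
        = ‖(Submodule.orthogonalProjectionOnto (W i) y : EuclideanSpace ℝ (Fin d))‖) → ‖x‖ = ‖y‖ := by
    intro x y hxy
    have h1 := key_sum d n W a A h x
    have h2 := key_sum d n W a A h y
    have : ∑ i, a i ^ 2 * ‖(Submodule.orthogonalProjectionOnto (W i) x : EuclideanSpace ℝ (Fin d))‖ ^ 2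
        = ∑ i, a i ^ 2 * ‖(Submodule.orthogonalProjectionOnto (W i) y : EuclideanSpace ℝ (Fin d))‖ ^ 2 :=
      Finset.sum_congr rfl fun i _ => by rw [hxy i]
    have hsq : ‖x‖ ^ 2 = ‖y‖ ^ 2 := by
      have := h1.symm.trans (this.trans h2)
      exact mul_left_cancel₀ (ne_of_gt hA) this
    rw [← Real.sqrt_sq (norm_nonneg x), ← Real.sqrt_sq (norm_nonneg y), hsq]
  have pyth : ∀ (i : Fin n) (x : EuclideanSpace ℝ (Fin d)),
      ‖(Submodule.orthogonalProjectionOnto (W i) x : EuclideanSpace ℝ (Fin d))‖ ^ 2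
        + ‖(Submodule.orthogonalProjectionOnto (W i)ᗮ x : EuclideanSpace ℝ (Fin d))‖ ^ 2 = ‖x‖ ^ 2 := by
    intro i x
    have := Submodule.norm_sq_eq_add_norm_sq_projection (𝕜 := ℝ) x (W i)
    simp only [Submodule.norm_coe] at *
    linarith
  constructor
  · intro hPR x y hxy
    refine hPR x y fun i => ?_
    have hn := hnorm_of_comp x y hxy
    have hn2 : ‖x‖ ^ 2 = ‖y‖ ^ 2 := by rw [hn]
    have p1 := pyth i x
    have p2 := pyth i y
    have : ‖(Submodule.orthogonalProjectionOnto (W i) x : EuclideanSpace ℝ (Fin d))‖ ^ 2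
        = ‖(Submodule.orthogonalProjectionOnto (W i) y : EuclideanSpace ℝ (Fin d))‖ ^ 2 := by
      rw [hxy i] at p1
      linarith
    rw [← Real.sqrt_sq (norm_nonneg ((Submodule.orthogonalProjectionOnto (W i) x : EuclideanSpace ℝ (Fin d)))),
      ← Real.sqrt_sq (norm_nonneg ((Submodule.orthogonalProjectionOnto (W i) y : EuclideanSpace ℝ (Fin d)))), this]
  · intro hPR x y hxy
    refine hPR x y fun i => ?_
    have hn := hnorm_of_proj x y hxy
    have hn2 : ‖x‖ ^ 2 = ‖y‖ ^ 2 := by rw [hn]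
    have p1 := pyth i x
    have p2 := pyth i y
    have : ‖(Submodule.orthogonalProjectionOnto (W i)ᗮ x : EuclideanSpace ℝ (Fin d))‖ ^ 2
        = ‖(Submodule.orthogonalProjectionOnto (W i)ᗮ y : EuclideanSpace ℝ (Fin d))‖ ^ 2 := by
      rw [hxy i] at p1
      linarith
    rw [← Real.sqrt_sq (norm_nonneg ((Submodule.orthogonalProjectionOnto (W i)ᗮ x : EuclideanSpace ℝ (Fin d)))),
      ← Real.sqrt_sq (norm_nonneg ((Submodule.orthogonalProjectionOnto (W i)ᗮ y : EuclideanSpace ℝ (Fin d)))), this]
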